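/- Let θ be irrational with convergents 𝒫ᵢ, and suppose θ has partial quotients b_{I_j+1} = a_j tending to infinity along a subsequence of indices I_j (leaping subscripts), with all other partial quotients bounded. Let φ = (rθ + m)/n be in reduced form. If there exists an integer g such that g·𝒫_{I_j} ≡ (m, −r) (mod n) for infinitely many leaping subscripts I_j, then L(θ, φ) = 0. -/

import Mathlib

/-- Distance from a real number to the nearest integer. -/
noncomputable def distNearestInt (x : ℝ) : ℝ := |x - round x|

/-- The inhomogeneous approximation constant. -/
noncomputable def Lconst (θ φ : ℝ) : ℝ :=
  Filter.liminf (fun q : ℤ => |(q : ℝ)| * distNearestInt (q * θ - φ)) Filter.cofinite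


set_option maxHeartbeats 1000000

lemma distNearestInt_nonneg (x : ℝ) : 0 ≤ distNearestInt x := abs_nonneg _

lemma distNearestInt_le_abs_sub_int (x : ℝ) (k : ℤ) : distNearestInt x ≤ |x - (k : ℝ)| := by
  unfold distNearestInt
  rcases eq_or_ne (round x) k with h | h
  · rw [h]
  · have h0 : round x - k ≠ 0 := sub_ne_zero.mpr h
    have h1 : (1:ℝ) ≤ |((round x : ℝ)) - (k:ℝ)| := by
      have h2 : (1:ℤ) ≤ |round x - k| := Int.one_le_abs h0
      have h3 : ((1:ℤ):ℝ) ≤ |((round x - k : ℤ) : ℝ)| := by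
        rw [← Int.cast_abs]; exact_mod_cast h2
      push_cast at h3
      linarith
    have h2 : |x - round x| ≤ 1/2 := abs_sub_round x
    have h3 : |(round x : ℝ) - k| ≤ |x - k| + |x - round x| := by
      have e : (round x : ℝ) - k = (x - k) - (x - round x) := by ring
      rw [e]
      exact abs_sub _ _
    linarith

/-- Let θ be irrational with convergents `𝒫ᵢ = (pᵢ, qᵢ)`, whose partial quotients
`b_{I_j+1}` along the (strictly increasing) leaping subscripts `I_j` tend to
infinity while all other partial quotients are bounded.  If `φ = (rθ+m)/n` is in
reduced form and there is an integer `g` with `g·𝒫_{I_j} ≡ (m, −r) (mod n)` for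
infinitely many `j`, then `L(θ, φ) = 0`. -/
theorem Lconst_eq_zero_of_infinitely_many_leapers
    (θ : ℝ) (hθ : Irrational θ)
    (b : ℕ → ℤ) (hb : ∀ i : ℕ, 1 ≤ i → 1 ≤ b i)
    (p q : ℤ → ℤ)
    (hpm1 : p (-1) = 1) (hqm1 : q (-1) = 0)
    (hp0 : p 0 = b 0) (hq0 : q 0 = 1)
    (hprec : ∀ i : ℕ, p ((i : ℤ) + 1) = b (i + 1) * p i + p ((i : ℤ) - 1))
    (hqrec : ∀ i : ℕ, q ((i : ℤ) + 1) = b (i + 1) * q i + q ((i : ℤ) - 1))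
    (hconv : Filter.Tendsto (fun i : ℕ => (p i : ℝ) / (q i : ℝ)) Filter.atTop (nhds θ))
    -- leaping subscripts
    (I : ℕ → ℕ) (hI : StrictMono I)
    (ha : Filter.Tendsto (fun j : ℕ => b (I j + 1)) Filter.atTop Filter.atTop)
    (hbdd : ∃ C : ℤ, ∀ i : ℕ, 1 ≤ i → (∀ j : ℕ, i ≠ I j + 1) → b i ≤ C)
    -- φ = (rθ + m)/n in reduced form
    (n : ℕ) (hn : 2 ≤ n) (r m : ℤ)
    (hr : 0 ≤ r ∧ r < n) (hm : 0 ≤ m ∧ m < n)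
    (hgcd : Int.gcd r (Int.gcd m n) = 1)
    (φ : ℝ) (hφ : φ = (r * θ + m) / n)
    (g : ℤ)
    (hinf : {j : ℕ | g * p (I j) ≡ m [ZMOD (n : ℤ)] ∧
                     g * q (I j) ≡ -r [ZMOD (n : ℤ)]}.Infinite) :
    Lconst θ φ = 0 := by
  classical
  -- natural-number indexed convergents
  set pp : ℕ → ℤ := fun i => p (i : ℤ) with hpp_def
  set qq : ℕ → ℤ := fun i => q (i : ℤ) with hqq_def
  have hqq0 : qq 0 = 1 := hq0
  have hpp0 : pp 0 = b 0 := hp0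
  have hqq1 : qq 1 = b 1 := by
    have h := hqrec 0
    simp only [Nat.cast_zero, zero_add, zero_sub] at h
    simpa [hqq_def, hq0, hqm1] using h
  have hpp1 : pp 1 = b 1 * b 0 + 1 := by
    have h := hprec 0
    simp only [Nat.cast_zero, zero_add, zero_sub] at h
    simpa [hpp_def, hp0, hpm1] using h
  have hqqs : ∀ i : ℕ, qq (i + 2) = b (i + 2) * qq (i + 1) + qq i := by
    intro i
    have h := hqrec (i + 1)
    have e1 : ((i + 1 : ℕ) : ℤ) + 1 = ((i + 2 : ℕ) : ℤ) := by push_cast; ring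
    have e2 : ((i + 1 : ℕ) : ℤ) - 1 = ((i : ℕ) : ℤ) := by push_cast; ring
    rw [e1, e2] at h
    simpa [hqq_def] using h
  have hpps : ∀ i : ℕ, pp (i + 2) = b (i + 2) * pp (i + 1) + pp i := by
    intro i
    have h := hprec (i + 1)
    have e1 : ((i + 1 : ℕ) : ℤ) + 1 = ((i + 2 : ℕ) : ℤ) := by push_cast; ring
    have e2 : ((i + 1 : ℕ) : ℤ) - 1 = ((i : ℕ) : ℤ) := by push_cast; ring
    rw [e1, e2] at h
    simpa [hpp_def] using h
  -- positivity and growth of qq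
  have hq_pos : ∀ i : ℕ, 1 ≤ qq i := by
    intro i
    induction i using Nat.strong_induction_on with
    | _ i ih =>
      match i with
      | 0 => rw [hqq0]
      | 1 => rw [hqq1]; exact hb 1 le_rfl
      | (i + 2) =>
        have h1 := ih (i + 1) (by omega)
        have h0 := ih i (by omega)
        have hbb := hb (i + 2) (by omega)
        rw [hqqs i]
        nlinarith
  have hq_mono : ∀ i : ℕ, qq i ≤ qq (i + 1) := by
    intro i
    match i with
    | 0 => rw [hqq0, hqq1]; exact hb 1 le_rfl
    | (i + 1) =>
      have h1 := hq_pos (i + 1)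
      have h0 := hq_pos i
      have hbb := hb (i + 2) (by omega)
      rw [hqqs i]
      nlinarith
  have hq_ge : ∀ i : ℕ, (i : ℤ) ≤ qq i := by
    intro i
    induction i using Nat.strong_induction_on with
    | _ i ih =>
      match i with
      | 0 => rw [hqq0]; norm_num
      | 1 => rw [hqq1]; exact_mod_cast hb 1 le_rfl
      | (i + 2) =>
        have h1 := ih (i + 1) (by omega)
        have h0 := hq_pos i
        have hbb := hb (i + 2) (by omega)
        have h2 := hq_pos (i + 1)
        rw [hqqs i]
        push_cast
        push_cast at h1
        nlinarith
  have hq_b : ∀ i : ℕ, b (i + 1) * qq i ≤ qq (i + 1) := by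
    intro i
    match i with
    | 0 => rw [hqq0, hqq1]; ring_nf; exact le_rfl
    | (i + 1) =>
      have h0 := hq_pos i
      show b (i + 2) * qq (i + 1) ≤ qq (i + 2)
      rw [hqqs i]
      linarith
  -- determinant
  have hdet : ∀ i : ℕ, pp (i + 1) * qq i - pp i * qq (i + 1) = (-1) ^ i := by
    intro i
    induction i with
    | zero => rw [hpp0, hpp1, hqq0, hqq1]; ring
    | succ i ih =>
      rw [hpps i, hqqs i, pow_succ]
      nlinarith [ih]
  -- real convergents
  set x : ℕ → ℝ := fun i => (pp i : ℝ) / (qq i : ℝ) with hx_def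
  have hqR_pos : ∀ i : ℕ, (0 : ℝ) < (qq i : ℝ) := by
    intro i; exact_mod_cast lt_of_lt_of_le one_pos (hq_pos i)
  set u : ℕ → ℝ := fun i => (qq i : ℝ) * (qq (i + 1) : ℝ) with hu_def
  have hu_pos : ∀ i : ℕ, 0 < u i := fun i => mul_pos (hqR_pos i) (hqR_pos (i + 1))
  have hu_two : ∀ i : ℕ, 2 * u i ≤ u (i + 1) := by
    intro i
    have h1 : qq i + qq (i + 1) ≤ qq (i + 2) := by
      have h0 := hq_pos i
      have h2 := hq_pos (i + 1)
      have hbb := hb (i + 2) (by omega)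
      rw [hqqs i]; nlinarith
    have h2 : qq i ≤ qq (i + 1) := hq_mono i
    have h1' : (qq i : ℝ) + (qq (i + 1) : ℝ) ≤ (qq (i + 2) : ℝ) := by exact_mod_cast h1
    have h2' : (qq i : ℝ) ≤ (qq (i + 1) : ℝ) := by exact_mod_cast h2
    have hp1 := hqR_pos (i + 1)
    have hp0 := hqR_pos i
    simp only [hu_def]
    nlinarith
  have hstep : ∀ i : ℕ, |x (i + 1) - x i| = 1 / u i := by
    intro i
    have h0 := (hqR_pos i).ne'
    have h1 := (hqR_pos (i + 1)).ne'
    have hd : (pp (i + 1) : ℝ) * (qq i : ℝ) - (pp i : ℝ) * (qq (i + 1) : ℝ) = (-1 : ℝ) ^ i := by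
      exact_mod_cast congrArg (fun z : ℤ => (z : ℝ)) (hdet i)
    have e : x (i + 1) - x i = (-1 : ℝ) ^ i / u i := by
      simp only [hx_def, hu_def]
      field_simp
      linear_combination hd
    rw [e, abs_div, abs_pow, abs_neg, abs_one, one_pow, abs_of_pos (hu_pos i)]
  -- telescoping bound
  have htel : ∀ i N : ℕ, |x (i + N) - x i| ≤ 2 / u i - 2 / u (i + N) := by
    intro i N
    induction N with
    | zero => simp
    | succ N ih =>
      have e : i + (N + 1) = (i + N) + 1 := by omega
      rw [e]
      have h1 : |x (i + N + 1) - x i| ≤ |x (i + N + 1) - x (i + N)| + |x (i + N) - x i| := by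
        have e2 : x (i + N + 1) - x i = (x (i + N + 1) - x (i + N)) + (x (i + N) - x i) := by
          ring
        rw [e2]; exact abs_add_le _ _
      have h2 := hstep (i + N)
      have h3 := hu_two (i + N)
      have h4 := hu_pos (i + N)
      have h5 := hu_pos (i + N + 1)
      have h6 : 2 / u (i + N + 1) ≤ 1 / u (i + N) := by
        rw [div_le_div_iff₀ h5 h4]; nlinarith
      have h7 : 2 / u (i + N) = 1 / u (i + N) + 1 / u (i + N) := by ring
      linarith
  -- θ lies within 2/u i of the i-th convergent
  have hxconv : Filter.Tendsto x Filter.atTop (nhds θ) := hconv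
  have hθ_le : ∀ i : ℕ, |θ - x i| ≤ 2 / u i := by
    intro i
    have h1 : Filter.Tendsto (fun N : ℕ => x (N + i)) Filter.atTop (nhds θ) :=
      hxconv.comp (Filter.tendsto_add_atTop_nat i)
    have h2 : Filter.Tendsto (fun N : ℕ => |x (N + i) - x i|) Filter.atTop
        (nhds |θ - x i|) := ((h1.sub_const (x i)).abs)
    refine le_of_tendsto h2 (Filter.Eventually.of_forall fun N => ?_)
    have h3 := htel i N
    rw [add_comm N i]
    have h4 : (0:ℝ) ≤ 2 / u (i + N) := le_of_lt (div_pos two_pos (hu_pos (i + N)))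
    linarith
  have happrox : ∀ i : ℕ, |(qq i : ℝ) * θ - (pp i : ℝ)| ≤ 2 / (qq (i + 1) : ℝ) := by
    intro i
    have h0 := hqR_pos i
    have h1 := hqR_pos (i + 1)
    have h2 := hθ_le i
    have e : (qq i : ℝ) * θ - (pp i : ℝ) = (qq i : ℝ) * (θ - x i) := by
      simp only [hx_def]
      field_simp
    rw [e, abs_mul, abs_of_pos h0]
    calc (qq i : ℝ) * |θ - x i| ≤ (qq i : ℝ) * (2 / u i) :=
          mul_le_mul_of_nonneg_left h2 h0.le
      _ = 2 / (qq (i + 1) : ℝ) := by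
          simp only [hu_def]; field_simp
  -- g ≠ 0
  have hg0 : g ≠ 0 := by
    intro hg
    obtain ⟨j, hj1, hj2⟩ := hinf.nonempty
    rw [hg, zero_mul] at hj1 hj2
    have hd1 : (n:ℤ) ∣ m := by
      have := Int.modEq_iff_dvd.mp hj1
      simpa using this
    have hd2 : (n:ℤ) ∣ r := by
      have := Int.modEq_iff_dvd.mp hj2
      have h2 : (n:ℤ) ∣ -(-r - 0) := dvd_neg.mpr this
      simpa using h2
    have hm0 : m = 0 := by
      by_contra h
      have := Int.le_of_dvd (lt_of_le_of_ne hm.1 (Ne.symm h)) hd1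
      omega
    have hr0 : r = 0 := by
      by_contra h
      have := Int.le_of_dvd (lt_of_le_of_ne hr.1 (Ne.symm h)) hd2
      omega
    rw [hm0, hr0] at hgcd
    simp [Int.gcd_zero_left] at hgcd
    omega
  -- main construction
  have hmain : ∀ ε : ℝ, 0 < ε → ∀ N : ℕ, ∃ Q : ℤ,
      (N : ℤ) < |Q| ∧ |(Q:ℝ)| * distNearestInt ((Q:ℝ) * θ - φ) ≤ ε := by
    intro ε hε N
    set G : ℝ := |(g : ℝ)| with hG_def
    have hG1 : (1:ℝ) ≤ G := by
      have := Int.one_le_abs hg0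
      rw [hG_def, ← Int.cast_abs]
      exact_mod_cast this
    have hnR : (2:ℝ) ≤ (n:ℝ) := by exact_mod_cast hn
    obtain ⟨M, hM⟩ := exists_nat_ge (2 * G * (G + (n:ℝ)) / ((n:ℝ)^2 * ε))
    obtain ⟨j₀, hj₀⟩ := Filter.eventually_atTop.mp (ha.eventually_ge_atTop ((M:ℤ) + 1))
    obtain ⟨j, hjS, hjlt⟩ := hinf.exists_gt (max j₀ (n * (N + 1)))
    set i := I j with hi_def
    have hij : j ≤ i := hI.le_apply
    have hqi_lb : (n : ℤ) * ((N:ℤ) + 1) < qq i := by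
      have h1 : (i:ℤ) ≤ qq i := hq_ge i
      have h2 : n * (N + 1) < j := lt_of_le_of_lt (le_max_right _ _) hjlt
      have h3 : ((n * (N + 1) : ℕ) : ℤ) < (j : ℤ) := by exact_mod_cast h2
      push_cast at h3
      have h4 : (j : ℤ) ≤ (i : ℤ) := by exact_mod_cast hij
      linarith
    have hbj : (M:ℤ) + 1 ≤ b (i + 1) := hj₀ j (le_trans (le_max_left _ _) hjlt.le)
    obtain ⟨hj1, hj2⟩ := hjS
    have hd1 : (n:ℤ) ∣ g * pp i - m := by
      have h := Int.modEq_iff_dvd.mp hj1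
      have h2 : (n:ℤ) ∣ -(m - g * p (I j)) := dvd_neg.mpr h
      simpa [hpp_def, hi_def] using h2
    have hd2 : (n:ℤ) ∣ g * qq i + r := by
      have h := Int.modEq_iff_dvd.mp hj2
      have h2 : (n:ℤ) ∣ -(-r - g * q (I j)) := dvd_neg.mpr h
      simpa [hqq_def, hi_def] using h2
    obtain ⟨k, hk⟩ := hd1
    obtain ⟨Q, hQ⟩ := hd2
    have hnZ : (0:ℤ) < (n:ℤ) := by exact_mod_cast lt_of_lt_of_le two_pos hn
    have hg1 : (1:ℤ) ≤ |g| := Int.one_le_abs hg0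
    have hqi1 := hq_pos i
    -- |Q| is large
    have habs_eq : |g * qq i + r| = (n:ℤ) * |Q| := by
      rw [hQ, abs_mul, abs_of_nonneg hnZ.le]
    have habs_lb : |g| * qq i - r ≤ |g * qq i + r| := by
      have h1 : |g * qq i| ≤ |g * qq i + r| + |r| := by
        have e : g * qq i = (g * qq i + r) - r := by ring
        conv_lhs => rw [e]
        exact abs_sub _ _
      rw [abs_mul, abs_of_nonneg (by linarith : (0:ℤ) ≤ qq i), abs_of_nonneg hr.1] at h1
      linarith
    have hQ_lb : (n:ℤ) * (N:ℤ) < (n:ℤ) * |Q| := by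
      rw [← habs_eq]
      have h5 : qq i ≤ |g| * qq i := le_mul_of_one_le_left (by linarith) hg1
      linarith [habs_lb, hr.2, hqi_lb]
    refine ⟨Q, lt_of_mul_lt_mul_left hQ_lb hnZ.le, ?_⟩
    -- the approximation bound
    have hnne : (n:ℝ) ≠ 0 := by positivity
    have hQR : (n:ℝ) * (Q:ℝ) = (g:ℝ) * (qq i : ℝ) + (r:ℝ) := by
      have := congrArg (fun z : ℤ => (z : ℝ)) hQ
      push_cast at this
      linarith
    have hkR : (n:ℝ) * (k:ℝ) = (g:ℝ) * (pp i : ℝ) - (m:ℝ) := by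
      have := congrArg (fun z : ℤ => (z : ℝ)) hk
      push_cast at this
      linarith
    have hQ' : (Q:ℝ) = ((g:ℝ) * (qq i : ℝ) + (r:ℝ)) / (n:ℝ) := by
      rw [eq_div_iff hnne]; linarith [hQR]
    have hk' : (k:ℝ) = ((g:ℝ) * (pp i : ℝ) - (m:ℝ)) / (n:ℝ) := by
      rw [eq_div_iff hnne]; linarith [hkR]
    have hcalc : ((Q:ℝ) * θ - φ) - (k:ℝ) = (g:ℝ) * ((qq i : ℝ) * θ - (pp i : ℝ)) / (n:ℝ) := by
      rw [hφ, hQ', hk']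
      field_simp
      ring
    have hq1R := hqR_pos (i + 1)
    have hq0R := hqR_pos i
    have hdist : distNearestInt ((Q:ℝ) * θ - φ) ≤ G * 2 / ((n:ℝ) * (qq (i+1) : ℝ)) := by
      have h1 := distNearestInt_le_abs_sub_int ((Q:ℝ) * θ - φ) k
      have h2 : |((Q:ℝ) * θ - φ) - (k:ℝ)| = G * |(qq i : ℝ) * θ - (pp i : ℝ)| / (n:ℝ) := by
        rw [hcalc, abs_div, abs_mul, abs_of_nonneg (by positivity : (0:ℝ) ≤ (n:ℝ))]
      rw [h2] at h1
      calc distNearestInt ((Q:ℝ) * θ - φ)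
          ≤ G * |(qq i : ℝ) * θ - (pp i : ℝ)| / (n:ℝ) := h1
        _ ≤ G * (2 / (qq (i+1) : ℝ)) / (n:ℝ) := by
            gcongr
            exact happrox i
        _ = G * 2 / ((n:ℝ) * (qq (i+1) : ℝ)) := by
            rw [mul_div_assoc', div_div]
            ring_nf
    have hQub : (n:ℝ) * |(Q:ℝ)| ≤ (G + (n:ℝ)) * (qq i : ℝ) := by
      have h1 : |g * qq i + r| ≤ |g| * qq i + (n:ℤ) * qq i := by
        have h2 : |g * qq i + r| ≤ |g * qq i| + |r| := abs_add_le _ _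
        rw [abs_mul, abs_of_nonneg (by linarith : (0:ℤ) ≤ qq i), abs_of_nonneg hr.1] at h2
        nlinarith [hr.2]
      rw [habs_eq] at h1
      have h3 : ((n:ℤ) * |Q| : ℤ) ≤ (|g| + (n:ℤ)) * qq i := by linarith
      have h4 : (((n:ℤ) * |Q| : ℤ) : ℝ) ≤ (((|g| + (n:ℤ)) * qq i : ℤ) : ℝ) := by
        exact_mod_cast h3
      push_cast at h4
      rw [hG_def]
      rw [← Int.cast_abs] at h4 ⊢
      linarith
    have hbR : ((M:ℝ) + 1) * (qq i : ℝ) ≤ (qq (i+1) : ℝ) := by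
      have h1 : ((M:ℤ) + 1) * qq i ≤ b (i + 1) * qq i :=
        mul_le_mul_of_nonneg_right hbj (by linarith)
      have h2 : ((M:ℤ) + 1) * qq i ≤ qq (i + 1) := le_trans h1 (hq_b i)
      exact_mod_cast h2
    have hM' : 2 * G * (G + (n:ℝ)) ≤ (M:ℝ) * ((n:ℝ)^2 * ε) := by
      rw [div_le_iff₀ (by positivity)] at hM
      linarith
    have hεn : (0:ℝ) < (n:ℝ) := by linarith
    -- final computation
    calc |(Q:ℝ)| * distNearestInt ((Q:ℝ) * θ - φ)
        ≤ |(Q:ℝ)| * (G * 2 / ((n:ℝ) * (qq (i+1) : ℝ))) :=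
          mul_le_mul_of_nonneg_left hdist (abs_nonneg _)
      _ = (|(Q:ℝ)| * (G * 2)) / ((n:ℝ) * (qq (i+1) : ℝ)) := by ring
      _ ≤ ε := by
          rw [div_le_iff₀ (by positivity)]
          refine le_of_mul_le_mul_left ?_ hεn
          have hGnn : (0:ℝ) ≤ 2 * G := by positivity
          calc (n:ℝ) * (|(Q:ℝ)| * (G * 2)) = ((n:ℝ) * |(Q:ℝ)|) * (2 * G) := by ring
            _ ≤ ((G + (n:ℝ)) * (qq i : ℝ)) * (2 * G) :=
                mul_le_mul_of_nonneg_right hQub hGnn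
            _ = (2 * G * (G + (n:ℝ))) * (qq i : ℝ) := by ring
            _ ≤ ((M:ℝ) * ((n:ℝ)^2 * ε)) * (qq i : ℝ) :=
                mul_le_mul_of_nonneg_right hM' hq0R.le
            _ ≤ (((M:ℝ) + 1) * ((n:ℝ)^2 * ε)) * (qq i : ℝ) := by
                nlinarith [mul_pos (mul_pos (pow_pos hεn 2) hε) hq0R]
            _ = ((n:ℝ)^2 * ε) * (((M:ℝ) + 1) * (qq i : ℝ)) := by ring
            _ ≤ ((n:ℝ)^2 * ε) * (qq (i+1) : ℝ) :=
                mul_le_mul_of_nonneg_left hbR (by positivity)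
            _ = (n:ℝ) * (ε * ((n:ℝ) * (qq (i+1) : ℝ))) := by ring
  -- conclude via liminf
  have hnonneg : ∀ Q : ℤ, 0 ≤ |(Q:ℝ)| * distNearestInt ((Q:ℝ) * θ - φ) :=
    fun Q => mul_nonneg (abs_nonneg _) (distNearestInt_nonneg _)
  have hfreq : ∀ ε : ℝ, 0 < ε →
      ∃ᶠ Q : ℤ in Filter.cofinite, |(Q:ℝ)| * distNearestInt ((Q:ℝ) * θ - φ) ≤ ε := by
    intro ε hε
    rw [Filter.frequently_cofinite_iff_infinite]
    intro hfin
    obtain ⟨N, hN⟩ := (hfin.image Int.natAbs).bddAbove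
    obtain ⟨Q, hQ1, hQ2⟩ := hmain ε hε N
    have h1 : Q.natAbs ≤ N := hN ⟨Q, hQ2, rfl⟩
    have h2 : (N:ℤ) < |Q| := hQ1
    rw [Int.abs_eq_natAbs] at h2
    omega
  have hBdd : Filter.IsBoundedUnder (· ≥ ·) Filter.cofinite
      (fun Q : ℤ => |(Q:ℝ)| * distNearestInt ((Q:ℝ) * θ - φ)) :=
    ⟨0, Filter.eventually_map.mpr (Filter.Eventually.of_forall hnonneg)⟩
  have hCo : Filter.IsCoboundedUnder (· ≥ ·) Filter.cofinite
      (fun Q : ℤ => |(Q:ℝ)| * distNearestInt ((Q:ℝ) * θ - φ)) :=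
    Filter.IsCoboundedUnder.of_frequently_le (hfreq 1 one_pos)
  have h0 : 0 ≤ Lconst θ φ :=
    Filter.le_liminf_of_le hCo (Filter.Eventually.of_forall hnonneg)
  have h1 : ∀ ε : ℝ, 0 < ε → Lconst θ φ ≤ ε := fun ε hε =>
    Filter.liminf_le_of_frequently_le (hfreq ε hε) hBdd
  have h2 : Lconst θ φ ≤ 0 := by
    apply le_of_forall_pos_le_add
    intro ε hε
    have := h1 ε hε
    linarith
  linarith
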